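/- Let P be a finite p-group of class 2 and exponent p (p odd). Then there exist subgroups Q and A of P such that Z(Q) = Q' = P', A ≤ Z(P), and P = Q × A (internal direct product). -/

import Mathlib

open scoped commutatorElement

lemma exists_addCompl {M : Type*} [AddCommGroup M] {p : ℕ} [Fact p.Prime]
    [Module (ZMod p) M] (H : AddSubgroup M) :
    ∃ K : AddSubgroup M, H ⊓ K = ⊥ ∧ H ⊔ K = ⊤ := by
  obtain ⟨K', hK'⟩ := Submodule.exists_isCompl (AddSubgroup.toZModSubmodule p H)
  refine ⟨(AddSubgroup.toZModSubmodule p).symm K', ?_, ?_⟩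
  · apply (AddSubgroup.toZModSubmodule p).injective
    rw [OrderIso.map_inf, OrderIso.apply_symm_apply, OrderIso.map_bot]
    exact disjoint_iff.mp hK'.disjoint
  · apply (AddSubgroup.toZModSubmodule p).injective
    rw [OrderIso.map_sup, OrderIso.apply_symm_apply, OrderIso.map_top]
    exact codisjoint_iff.mp hK'.codisjoint

lemma exists_compl_of_exp {G : Type*} [CommGroup G] {p : ℕ} (hp : p.Prime)
    (h : ∀ x : G, x ^ p = 1) (H : Subgroup G) :
    ∃ K : Subgroup G, H ⊓ K = ⊥ ∧ H ⊔ K = ⊤ := by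
  haveI : Fact p.Prime := ⟨hp⟩
  haveI : NeZero p := ⟨hp.ne_zero⟩
  letI : Module (ZMod p) (Additive G) := AddCommGroup.zmodModule (n := p)
    (fun x => by rw [← ofMul_toMul x, ← ofMul_pow, h, ofMul_one])
  obtain ⟨K', h1, h2⟩ := exists_addCompl (p := p) (Subgroup.toAddSubgroup H)
  refine ⟨Subgroup.toAddSubgroup.symm K', ?_, ?_⟩
  · apply Subgroup.toAddSubgroup.injective
    rw [OrderIso.map_inf, OrderIso.apply_symm_apply, OrderIso.map_bot]
    exact h1
  · apply Subgroup.toAddSubgroup.injective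
    rw [OrderIso.map_sup, OrderIso.apply_symm_apply, OrderIso.map_top]
    exact h2

lemma comm_central_left {P : Type*} [Group P] {z : P} (hz : z ∈ Subgroup.center P)
    (q h : P) : ⁅z * q, h⁆ = ⁅q, h⁆ := by
  have hz' := Subgroup.mem_center_iff.mp hz
  rw [commutatorElement_def, commutatorElement_def, mul_inv_rev]
  calc z * q * h * (q⁻¹ * z⁻¹) * h⁻¹ = z * (q * h * q⁻¹) * z⁻¹ * h⁻¹ := by group
    _ = q * h * q⁻¹ * z * z⁻¹ * h⁻¹ := by rw [(hz' (q * h * q⁻¹)).symm]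
    _ = q * h * q⁻¹ * h⁻¹ := by group

lemma comm_central_right {P : Type*} [Group P] {z : P} (hz : z ∈ Subgroup.center P)
    (g h : P) : ⁅g, z * h⁆ = ⁅g, h⁆ := by
  rw [← commutatorElement_inv, comm_central_left hz h g, commutatorElement_inv]

theorem stmt_0 {P : Type*} [Group P] [Finite P] {p : ℕ} (hp : p.Prime) (hodd : Odd p)
    (hexp : ∀ x : P, x ^ p = 1) (hclass : commutator P ≤ Subgroup.center P) :
    ∃ Q A : Subgroup P,
      Q ⊓ Subgroup.centralizer (Q : Set P) = ⁅Q, Q⁆ ∧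
      ⁅Q, Q⁆ = commutator P ∧
      A ≤ Subgroup.center P ∧ Q ⊓ A = ⊥ ∧ Q ⊔ A = ⊤ := by
  set C := commutator P with hC
  set Z := Subgroup.center P with hZ
  -- Part A : complement of C inside Z
  have hexpZ : ∀ x : Z, x ^ p = 1 := fun x => Subtype.ext (by
    push_cast; exact hexp (x : P))
  letI : CommGroup Z := { Z.toGroup with
    mul_comm := fun a b => Subtype.ext (Subgroup.mem_center_iff.mp b.2 a) }
  obtain ⟨B, hB1, hB2⟩ := exists_compl_of_exp (G := Z) hp hexpZ (C.subgroupOf Z)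
  set A := B.map Z.subtype with hA
  have hAZ : A ≤ Z := Subgroup.map_subtype_le B
  have hCA : ∀ x : P, x ∈ C → x ∈ A → x = 1 := by
    intro x hxC hxA
    obtain ⟨b, hb, rfl⟩ := hxA
    have hb' : b ∈ C.subgroupOf Z ⊓ B := ⟨(Subgroup.mem_subgroupOf).mpr hxC, hb⟩
    rw [hB1] at hb'
    simp [Subgroup.mem_bot.mp hb']
  have hZCA : ∀ z : P, z ∈ Z → z ∈ C ⊔ A := by
    intro z hz
    have : (⟨z, hz⟩ : Z) ∈ C.subgroupOf Z ⊔ B := by rw [hB2]; trivial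
    obtain ⟨c, hc, b, hb, hcb⟩ := Subgroup.mem_sup.mp this
    have : z = (c : P) * (b : P) := by
      have := congrArg (Subtype.val) hcb; simpa using this.symm
    rw [this]
    exact Subgroup.mul_mem_sup (Subgroup.mem_subgroupOf.mp hc)
      (Subgroup.mem_map_of_mem _ hb)
  -- Part Q : complement of the image of Z inside P ⧸ C
  letI : CommGroup (P ⧸ C) :=
    { (inferInstance : Group (P ⧸ C)) with
      mul_comm := fun a b => by
        induction a using QuotientGroup.induction_on with | H x =>
        induction b using QuotientGroup.induction_on with | H y =>
        show QuotientGroup.mk (x * y) = QuotientGroup.mk (y * x)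
        rw [QuotientGroup.eq]
        have : (x * y)⁻¹ * (y * x) = ⁅y⁻¹, x⁻¹⁆ := by
          rw [commutatorElement_def]; group
        rw [this, hC, commutator_def]
        exact Subgroup.commutator_mem_commutator (Subgroup.mem_top _) (Subgroup.mem_top _) }
  set mk : P →* P ⧸ C := QuotientGroup.mk' C with hmk
  have hexpQ : ∀ x : P ⧸ C, x ^ p = 1 := by
    intro x
    induction x using QuotientGroup.induction_on with | H y =>
    show (mk y) ^ p = 1
    rw [← map_pow, hexp y, map_one]
  obtain ⟨W, hW1, hW2⟩ := exists_compl_of_exp hp hexpQ (Z.map mk)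
  set Q := W.comap mk with hQ
  have hCQ : C ≤ Q := by
    intro x hx
    have : mk x = 1 := (QuotientGroup.eq_one_iff x).mpr hx
    show mk x ∈ W
    rw [this]; exact W.one_mem
  have hQZC : ∀ x : P, x ∈ Q → x ∈ Z → x ∈ C := by
    intro x hxQ hxZ
    have : mk x ∈ Z.map mk ⊓ W := ⟨Subgroup.mem_map_of_mem _ hxZ, hxQ⟩
    rw [hW1] at this
    exact (QuotientGroup.eq_one_iff x).mp (Subgroup.mem_bot.mp this)
  have hdecomp : ∀ x : P, ∃ z, z ∈ Z ∧ ∃ q, q ∈ Q ∧ x = z * q := by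
    intro x
    have : mk x ∈ Z.map mk ⊔ W := by rw [hW2]; trivial
    obtain ⟨a, ha, b, hb, hab⟩ := Subgroup.mem_sup.mp this
    obtain ⟨z, hz, rfl⟩ := ha
    refine ⟨z, hz, z⁻¹ * x, ?_, by group⟩
    show mk (z⁻¹ * x) ∈ W
    have : mk (z⁻¹ * x) = b := by
      rw [map_mul, map_inv, ← hab]; group
    rw [this]; exact hb
  -- conclusion (2)
  have hQQ : ⁅Q, Q⁆ = C := by
    apply le_antisymm
    · rw [hC, commutator_def]
      exact Subgroup.commutator_mono le_top le_top
    · rw [hC, commutator_def, Subgroup.commutator_le]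
      intro g1 _ g2 _
      obtain ⟨z1, hz1, q1, hq1, rfl⟩ := hdecomp g1
      obtain ⟨z2, hz2, q2, hq2, rfl⟩ := hdecomp g2
      rw [comm_central_left hz1, comm_central_right hz2]
      exact Subgroup.commutator_mem_commutator hq1 hq2
  have hZcent : Z ≤ Subgroup.centralizer (Q : Set P) := by
    intro z hz
    exact fun g _ => Subgroup.mem_center_iff.mp hz g
  refine ⟨Q, A, ?_, hQQ, hAZ, ?_, ?_⟩
  · rw [hQQ]
    apply le_antisymm
    · rintro x ⟨hxQ, hxCent⟩
      refine hQZC x hxQ (Subgroup.mem_center_iff.mpr fun g => ?_)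
      obtain ⟨z, hz, q, hq, rfl⟩ := hdecomp g
      have hqx : q * x = x * q := hxCent q hq
      have hzx := Subgroup.mem_center_iff.mp hz x
      calc z * q * x = z * (x * q) := by rw [mul_assoc, hqx]
        _ = x * z * q := by rw [← mul_assoc, ← hzx]
        _ = x * (z * q) := by rw [mul_assoc]
    · exact le_inf hCQ (le_trans hclass hZcent)
  · rw [eq_bot_iff]
    rintro x ⟨hxQ, hxA⟩
    have hxC : x ∈ C := hQZC x hxQ (hAZ hxA)
    simp [hCA x hxC hxA]
  · rw [eq_top_iff]
    intro x _
    obtain ⟨z, hz, q, hq, rfl⟩ := hdecomp x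
    exact mul_mem (sup_le_sup_right hCQ A (hZCA z hz)) (Subgroup.mem_sup_left hq)
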